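/- Let p and q be coprime positive integers. Identify ℂ¹² with ℂ⁶ × ℂ⁶. Then the set A' × A' ⊆ ℂ¹² has exactly four irreducible components, namely the four products A'_i × A'_j for i, j ∈ {r, c}. Precisely: (i) A' × A' = (A'_r × A'_r) ∪ (A'_r × A'_c) ∪ (A'_c × A'_r) ∪ (A'_c × A'_c); (ii) for each i, j ∈ {r, c}, the vanishing ideal of A'_i × A'_j in the polynomial ring in 12 variables over ℂ is a prime ideal; (iii) no one of these four product sets is contained in another. -/

import Mathlib

/-- `A' = {x ∈ ℂ⁶ : p·x₄·x₂ − q·x₁·x₅ = 0 and p·x₄·x₃ − q·x₁·x₆ = 0}`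
(coordinates `x₁,…,x₆` are `x 0, …, x 5`). -/
def setA' (p q : ℕ) : Set (Fin 6 → ℂ) :=
  {x | (p : ℂ) * x 3 * x 1 - (q : ℂ) * x 0 * x 4 = 0 ∧
       (p : ℂ) * x 3 * x 2 - (q : ℂ) * x 0 * x 5 = 0}

/-- `A'_r = {x ∈ ℂ⁶ : x₁ = 0 and x₄ = 0}`. -/
def setA'r : Set (Fin 6 → ℂ) := {x | x 0 = 0 ∧ x 3 = 0}

/-- `A'_c = {x ∈ ℂ⁶ : p·x₄·x₂ − q·x₁·x₅ = 0, p·x₄·x₃ − q·x₁·x₆ = 0, x₂·x₆ − x₃·x₅ = 0}`. -/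
def setA'c (p q : ℕ) : Set (Fin 6 → ℂ) :=
  {x | (p : ℂ) * x 3 * x 1 - (q : ℂ) * x 0 * x 4 = 0 ∧
       (p : ℂ) * x 3 * x 2 - (q : ℂ) * x 0 * x 5 = 0 ∧
       x 1 * x 5 - x 2 * x 4 = 0}

/-- The product `S × T ⊆ ℂ¹²` of two subsets `S, T ⊆ ℂ⁶`, under the identification
`ℂ¹² = ℂ⁶ × ℂ⁶` by the first six and last six coordinates. -/
def prodSet (S T : Set (Fin 6 → ℂ)) : Set (Fin 12 → ℂ) :=
  {x | (fun i : Fin 6 => x ⟨i.val, by have := i.isLt; omega⟩) ∈ S ∧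
       (fun i : Fin 6 => x ⟨i.val + 6, by have := i.isLt; omega⟩) ∈ T}

open MvPolynomial

/- ## generic prime lemma -/

lemma my_eval_aeval {σ τ : Type*} (x : τ → ℂ) (Φ : σ → MvPolynomial τ ℂ) (f : MvPolynomial σ ℂ) :
    eval x (aeval Φ f) = eval (fun s => eval x (Φ s)) f := by
  rw [aeval_def, eval_eval₂]
  have h : (eval x).comp (algebraMap ℂ (MvPolynomial τ ℂ)) = RingHom.id ℂ := by
    ext c; simp
  rw [h, eval₂_id]

lemma vi_range_prime {σ : Type*} {k : ℕ} (Φ : Fin k → MvPolynomial σ ℂ) :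
    (MvPolynomial.vanishingIdeal ℂ
      (Set.range fun a : σ → ℂ => fun i => eval a (Φ i))).IsPrime := by
  have h : MvPolynomial.vanishingIdeal ℂ (Set.range fun a : σ → ℂ => fun i => eval a (Φ i))
      = RingHom.ker (aeval Φ : MvPolynomial (Fin k) ℂ →ₐ[ℂ] MvPolynomial σ ℂ) := by
    ext f
    rw [mem_vanishingIdeal_iff, RingHom.mem_ker]
    constructor
    · intro hf
      apply MvPolynomial.funext
      intro a
      rw [my_eval_aeval]
      exact hf _ ⟨a, rfl⟩
    · rintro hf x ⟨a, rfl⟩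
      show eval (fun i => eval a (Φ i)) f = 0
      rw [← my_eval_aeval a Φ f, hf, map_zero]
  rw [h]
  exact RingHom.ker_isPrime _

/- ## join and prodSet -/

def join6 (a b : Fin 6 → ℂ) : Fin 12 → ℂ :=
  fun i => if h : i.val < 6 then a ⟨i.val, h⟩ else b ⟨i.val - 6, by omega⟩

lemma proj1_join (a b : Fin 6 → ℂ) :
    (fun i : Fin 6 => join6 a b ⟨i.val, by have := i.isLt; omega⟩) = a := by
  funext i
  simp [join6]

lemma proj2_join (a b : Fin 6 → ℂ) :
    (fun i : Fin 6 => join6 a b ⟨i.val + 6, by have := i.isLt; omega⟩) = b := by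
  funext i
  have h : ¬ ((i.val + 6) < 6) := by omega
  have e : (⟨i.val + 6 - 6, by omega⟩ : Fin 6) = i := by apply Fin.ext; simp
  simp only [join6, dif_neg h, e]

lemma mem_prodSet_join {S T : Set (Fin 6 → ℂ)} {a b : Fin 6 → ℂ} :
    join6 a b ∈ prodSet S T ↔ a ∈ S ∧ b ∈ T := by
  unfold prodSet
  rw [Set.mem_setOf_eq, proj1_join, proj2_join]

lemma notsub {S T U V : Set (Fin 6 → ℂ)} {a b : Fin 6 → ℂ} (ha : a ∈ S) (hb : b ∈ T)
    (h : ¬ (a ∈ U ∧ b ∈ V)) : ¬ prodSet S T ⊆ prodSet U V :=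
  fun hsub => h (mem_prodSet_join.mp (hsub (mem_prodSet_join.mpr ⟨ha, hb⟩)))

lemma prodSet_range {α β : Type*} (φ : Fin 6 → MvPolynomial α ℂ) (ψ : Fin 6 → MvPolynomial β ℂ) :
    prodSet (Set.range fun a : α → ℂ => fun i => eval a (φ i))
            (Set.range fun b : β → ℂ => fun i => eval b (ψ i)) =
      Set.range (fun c : α ⊕ β → ℂ => fun i : Fin 12 =>
        eval c (if h : i.val < 6 then rename Sum.inl (φ ⟨i.val, h⟩)
                else rename Sum.inr (ψ ⟨i.val - 6, by omega⟩))) := by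
  ext x
  constructor
  · rintro ⟨⟨a, ha⟩, ⟨b, hb⟩⟩
    refine ⟨Sum.elim a b, ?_⟩
    funext i
    beta_reduce
    by_cases h : i.val < 6
    · rw [dif_pos h, eval_rename, Sum.elim_comp_inl]
      have h2 := congrFun ha (⟨i.val, h⟩ : Fin 6)
      simp only at h2
      rw [h2]
    · rw [dif_neg h, eval_rename, Sum.elim_comp_inr]
      have h2 := congrFun hb (⟨i.val - 6, by omega⟩ : Fin 6)
      simp only at h2
      rw [h2]
      have e : (⟨(i.val - 6) + 6, by omega⟩ : Fin 12) = i := by ext; simp; omega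
      rw [e]
  · rintro ⟨c, rfl⟩
    constructor
    · refine ⟨c ∘ Sum.inl, ?_⟩
      funext j
      have h : ((⟨j.val, by omega⟩ : Fin 12)).val < 6 := j.isLt
      simp only [dif_pos h, eval_rename]
    · refine ⟨c ∘ Sum.inr, ?_⟩
      funext j
      have h : ¬ (((⟨j.val + 6, by omega⟩ : Fin 12)).val < 6) := by simp
      simp only [dif_neg h, eval_rename]
      have e : (⟨j.val + 6 - 6, by omega⟩ : Fin 6) = j := by ext; simp
      rw [e]

/- ## parametrizations -/

lemma vec6_five {α : Type*} (a b c d e f : α) : ![a,b,c,d,e,f] 5 = f := rfl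

noncomputable def φr : Fin 6 → MvPolynomial (Fin 4) ℂ :=
  ![0, X 0, X 1, 0, X 2, X 3]

lemma range_φr : (Set.range fun a : Fin 4 → ℂ => fun i => eval a (φr i)) = setA'r := by
  ext x
  constructor
  · rintro ⟨a, rfl⟩
    exact ⟨by simp [φr], by simp [φr]⟩
  · rintro ⟨h0, h3⟩
    refine ⟨![x 1, x 2, x 4, x 5], ?_⟩
    funext i
    fin_cases i <;> simp [φr, vec6_five, h0, h3]

noncomputable def φc (p q : ℕ) : Fin 6 → MvPolynomial (Fin 5) ℂ :=
  ![C (p:ℂ) * X 4 * X 2, X 0 * X 2, X 1 * X 2, C (q:ℂ) * X 4 * X 3, X 0 * X 3, X 1 * X 3]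

lemma range_φc (p q : ℕ) (hp : (p:ℂ) ≠ 0) (hq : (q:ℂ) ≠ 0) :
    (Set.range fun a : Fin 5 → ℂ => fun i => eval a (φc p q i)) = setA'c p q := by
  ext x
  constructor
  · rintro ⟨a, rfl⟩
    refine ⟨?_, ?_, ?_⟩ <;> simp [φc, vec6_five] <;> ring
  · rintro ⟨h1, h2, h3⟩
    by_cases h12 : x 1 = 0 ∧ x 2 = 0
    · by_cases h45 : x 4 = 0 ∧ x 5 = 0
      · refine ⟨![0, 0, x 0 / p, x 3 / q, 1], ?_⟩
        funext i
        fin_cases i <;>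
          simp [φc, vec6_five, h12.1, h12.2, h45.1, h45.2] <;> (try field_simp)
      · have hx0 : x 0 = 0 := by
          rcases not_and_or.mp h45 with h | h
          · have e : (q:ℂ) * x 0 * x 4 = 0 := by
              linear_combination (-1 : ℂ) * h1 + (p:ℂ) * x 3 * h12.1
            rcases mul_eq_zero.mp e with e' | e'
            · rcases mul_eq_zero.mp e' with e'' | e''
              · exact absurd e'' hq
              · exact e''
            · exact absurd e' h
          · have e : (q:ℂ) * x 0 * x 5 = 0 := by
              linear_combination (-1 : ℂ) * h2 + (p:ℂ) * x 3 * h12.2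
            rcases mul_eq_zero.mp e with e' | e'
            · rcases mul_eq_zero.mp e' with e'' | e''
              · exact absurd e'' hq
              · exact e''
            · exact absurd e' h
        refine ⟨![x 4, x 5, 0, 1, x 3 / q], ?_⟩
        funext i
        fin_cases i <;> simp [φc, vec6_five, h12.1, h12.2, hx0] <;> (try field_simp)
    · rcases not_and_or.mp h12 with h | h
      · refine ⟨![x 1, x 2, 1, x 4 / x 1, x 0 / p], ?_⟩
        funext i
        fin_cases i <;> simp [φc, vec6_five] <;> (try field_simp) <;>
          first
            | linear_combination h1 | linear_combination (-1 : ℂ) * h1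
            | linear_combination h3 | linear_combination (-1 : ℂ) * h3
            | linear_combination x 1 * h1 | linear_combination (-1 : ℂ) * x 1 * h1
      · refine ⟨![x 1, x 2, 1, x 5 / x 2, x 0 / p], ?_⟩
        funext i
        fin_cases i <;> simp [φc, vec6_five] <;> (try field_simp) <;>
          first
            | linear_combination h2 | linear_combination (-1 : ℂ) * h2
            | linear_combination h3 | linear_combination (-1 : ℂ) * h3
            | linear_combination x 2 * h2 | linear_combination (-1 : ℂ) * x 2 * h2

/- ## decomposition -/

lemma setA'_eq_union (p q : ℕ) (hp : (p:ℂ) ≠ 0) (hq : (q:ℂ) ≠ 0) :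
    setA' p q = setA'r ∪ setA'c p q := by
  ext x
  constructor
  · rintro ⟨h1, h2⟩
    by_cases h0 : x 0 = 0 ∧ x 3 = 0
    · exact Or.inl h0
    · refine Or.inr ⟨h1, h2, ?_⟩
      rcases not_and_or.mp h0 with h | h
      · have key : (q:ℂ) * x 0 * (x 1 * x 5 - x 2 * x 4) = 0 := by
          linear_combination x 2 * h1 - x 1 * h2
        rcases mul_eq_zero.mp key with h' | h'
        · rcases mul_eq_zero.mp h' with h'' | h''
          · exact absurd h'' hq
          · exact absurd h'' h
        · exact h'
      · have key : (p:ℂ) * x 3 * (x 1 * x 5 - x 2 * x 4) = 0 := by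
          linear_combination x 5 * h1 - x 4 * h2
        rcases mul_eq_zero.mp key with h' | h'
        · rcases mul_eq_zero.mp h' with h'' | h''
          · exact absurd h'' hp
          · exact absurd h'' h
        · exact h'
  · rintro (⟨h0, h3⟩ | ⟨h1, h2, -⟩)
    · exact ⟨by rw [h0, h3]; ring, by rw [h0, h3]; ring⟩
    · exact ⟨h1, h2⟩


/-- For coprime positive integers `p` and `q`, the set `A' × A' ⊆ ℂ¹²` has exactly the four
irreducible components `A'_i × A'_j`, `i, j ∈ {r, c}`: it is their union, the vanishing ideal
(in 12 variables) of each is prime, and no one of them is contained in another. -/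
theorem setA'_prod_setA'_irreducible_components (p q : ℕ) (hp : 0 < p) (hq : 0 < q)
    (hpq : Nat.Coprime p q) :
    prodSet (setA' p q) (setA' p q) =
      prodSet setA'r setA'r ∪ prodSet setA'r (setA'c p q) ∪
        prodSet (setA'c p q) setA'r ∪ prodSet (setA'c p q) (setA'c p q) ∧
    (∀ i : Fin 4,
      (MvPolynomial.vanishingIdeal ℂ
        (![prodSet setA'r setA'r, prodSet setA'r (setA'c p q),
           prodSet (setA'c p q) setA'r, prodSet (setA'c p q) (setA'c p q)] i)).IsPrime) ∧
    (∀ i j : Fin 4, i ≠ j →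
      ¬ (![prodSet setA'r setA'r, prodSet setA'r (setA'c p q),
           prodSet (setA'c p q) setA'r, prodSet (setA'c p q) (setA'c p q)] i) ⊆
        (![prodSet setA'r setA'r, prodSet setA'r (setA'c p q),
           prodSet (setA'c p q) setA'r, prodSet (setA'c p q) (setA'c p q)] j)) := by
  have hp' : (p:ℂ) ≠ 0 := Nat.cast_ne_zero.mpr hp.ne'
  have hq' : (q:ℂ) ≠ 0 := Nat.cast_ne_zero.mpr hq.ne'
  refine ⟨?_, ?_, ?_⟩
  · ext x
    simp only [prodSet, Set.mem_setOf_eq, Set.mem_union, setA'_eq_union p q hp' hq',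
      Set.mem_union]
    tauto
  · intro i
    fin_cases i
    · show (MvPolynomial.vanishingIdeal ℂ (prodSet setA'r setA'r)).IsPrime
      rw [← range_φr, prodSet_range]
      exact vi_range_prime _
    · show (MvPolynomial.vanishingIdeal ℂ (prodSet setA'r (setA'c p q))).IsPrime
      rw [← range_φr, ← range_φc p q hp' hq', prodSet_range]
      exact vi_range_prime _
    · show (MvPolynomial.vanishingIdeal ℂ (prodSet (setA'c p q) setA'r)).IsPrime
      rw [← range_φr, ← range_φc p q hp' hq', prodSet_range]
      exact vi_range_prime _
    · show (MvPolynomial.vanishingIdeal ℂ (prodSet (setA'c p q) (setA'c p q))).IsPrime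
      rw [← range_φc p q hp' hq', prodSet_range]
      exact vi_range_prime _
  · have hy_r : (![0,1,0,0,0,1] : Fin 6 → ℂ) ∈ setA'r := by
      constructor <;> rfl
    have hy_nc : (![0,1,0,0,0,1] : Fin 6 → ℂ) ∉ setA'c p q := by
      rintro ⟨-, -, h3⟩
      simp [vec6_five] at h3
    have hz_c : (![1,0,0,0,0,0] : Fin 6 → ℂ) ∈ setA'c p q := by
      refine ⟨?_, ?_, ?_⟩ <;> simp [vec6_five]
    have hz_nr : (![1,0,0,0,0,0] : Fin 6 → ℂ) ∉ setA'r := by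
      rintro ⟨h, -⟩
      simp at h
    intro i j hij
    fin_cases i <;> fin_cases j <;>
      first
        | exact absurd rfl hij
        | exact notsub hy_r hy_r (by tauto)
        | exact notsub hy_r hz_c (by tauto)
        | exact notsub hz_c hy_r (by tauto)
        | exact notsub hz_c hz_c (by tauto)
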